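/- The integer six-tuples (k, l) = (15, 14, -11; 12, 6, 0) and (k', l') = (45, 43, -4; 42, 42, 0) satisfy k1+k2+k3 = l1+l2+l3, k1'+k2'+k3' = l1'+l2'+l3', and condition (†), and their invariants compare as follows: |σ2(k) − σ2(l)| = |σ2(k') − σ2(l')| = 181; σ3(k) − σ3(l) ≡ σ3(k') − σ3(l') (mod 181); σ1(l) ≡ σ1(l') ≡ 0 (mod 3); but 2·σ1(l)^2 − 6·σ2(l) is NOT congruent to 2·σ1(l')^2 − 6·σ2(l') modulo 181. (Arithmetic witness that these two positively curved Eschenburg spaces have equal homotopy invariants r, s, Σ but distinct first Pontryagin classes, hence are not tangentially homotopy equivalent.) -/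
import Mathlib


/-- First elementary symmetric polynomial in three variables. -/
def esig1 (a b c : ℤ) : ℤ := a + b + c

/-- Second elementary symmetric polynomial in three variables. -/
def esig2 (a b c : ℤ) : ℤ := a * b + b * c + a * c

/-- Third elementary symmetric polynomial in three variables. -/
def esig3 (a b c : ℤ) : ℤ := a * b * c

theorem eschenburg_pair_5 :
    -- the parameter vectors define Eschenburg spaces: σ₁(k) = σ₁(l)
    esig1 15 14 (-11) = esig1 12 6 0 ∧
    esig1 45 43 (-4) = esig1 42 42 0 ∧
    -- condition (†) for both tuples
    ((15 : ℤ) ≥ 14 ∧ (14 : ℤ) > 12 ∧ (12 : ℤ) ≥ 6 ∧ (6 : ℤ) ≥ 0 ∧ (0 : ℤ) = 0) ∧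
    ((45 : ℤ) ≥ 43 ∧ (43 : ℤ) > 42 ∧ (42 : ℤ) ≥ 42 ∧ (42 : ℤ) ≥ 0 ∧ (0 : ℤ) = 0) ∧
    -- invariant r
    |esig2 15 14 (-11) - esig2 12 6 0| = 181 ∧
    |esig2 45 43 (-4) - esig2 42 42 0| = 181 ∧
    -- invariant s
    esig3 15 14 (-11) - esig3 12 6 0 ≡ esig3 45 43 (-4) - esig3 42 42 0 [ZMOD 181] ∧
    -- invariant Σ
    (esig1 12 6 0 ≡ 0 [ZMOD 3] ∧ esig1 42 42 0 ≡ 0 [ZMOD 3]) ∧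
    -- first Pontryagin class p₁
    ¬ (2 * (esig1 12 6 0)^2 - 6 * esig2 12 6 0 ≡ 2 * (esig1 42 42 0)^2 - 6 * esig2 42 42 0 [ZMOD 181]) := by
  refine ⟨by decide, by decide, ⟨by decide, by decide, by decide, by decide, rfl⟩, ⟨by decide, by decide, by decide, by decide, rfl⟩, by decide, by decide, by decide, ⟨by decide, by decide⟩, by decide⟩
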